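/- Let n ≥ 3 and let Ω ⊆ ℝⁿ be a bounded convex domain whose boundary is of class C³. Let u ∈ C⁰(ℝⁿ \ Ω) be locally convex in ℝⁿ \ Ω̄, and define φ(x) := u(x) for x ∈ ∂Ω. Then φ is semi-convex with respect to ∂Ω. -/

import Mathlib

open Metric Filter MeasureTheory Bornology
open scoped RealInnerProductSpace Topology Classical

noncomputable section

/-- `ℝⁿ` -/
abbrev Euc (n : ℕ) : Type := EuclideanSpace ℝ (Fin n)

/-- `ℝ^{n-1}` -/
abbrev Euc' (n : ℕ) : Type := EuclideanSpace ℝ (Fin (n - 1))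

/-- The determinant of the Hessian matrix `D²v(x)`. -/
def hessDet (n : ℕ) (v : Euc n → ℝ) (x : Euc n) : ℝ :=
  (Matrix.of fun i j : Fin n =>
    fderiv ℝ (fun y => fderiv ℝ v y (EuclideanSpace.single i 1)) x
      (EuclideanSpace.single j 1)).det

/-- `u` is locally convex in `D`: every point of `D` has an open ball contained in `D`
on which `u` is convex. -/
def LocallyConvexOn' (n : ℕ) (D : Set (Euc n)) (u : Euc n → ℝ) : Prop :=
  ∀ x ∈ D, ∃ r > 0, ball x r ⊆ D ∧ ConvexOn ℝ (ball x r) u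

/-- `u` is a (continuous, locally convex) viscosity subsolution of `det D²u = 1` in `D`. -/
def ViscSubsol (n : ℕ) (D : Set (Euc n)) (u : Euc n → ℝ) : Prop :=
  ContinuousOn u D ∧ LocallyConvexOn' n D u ∧
    ∀ v : Euc n → ℝ, ContDiffOn ℝ 2 v D → ∀ x₀ ∈ D,
      IsLocalMax (fun x => u x - v x) x₀ → 1 ≤ hessDet n v x₀

/-- `u` is a (continuous, locally convex) viscosity supersolution of `det D²u = 1` in `D`. -/
def ViscSupersol (n : ℕ) (D : Set (Euc n)) (u : Euc n → ℝ) : Prop :=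
  ContinuousOn u D ∧ LocallyConvexOn' n D u ∧
    ∀ v : Euc n → ℝ, ContDiffOn ℝ 2 v D → LocallyConvexOn' n D v → ∀ x₀ ∈ D,
      IsLocalMin (fun x => u x - v x) x₀ → hessDet n v x₀ ≤ 1

/-- `u` is a viscosity solution of `det D²u = 1` in `D`. -/
def ViscSol (n : ℕ) (D : Set (Euc n)) (u : Euc n → ℝ) : Prop :=
  ViscSubsol n D u ∧ ViscSupersol n D u

/-- A local coordinate system at the boundary point `ξ` of `Ω`: `f` is a linear isometric
embedding of `ℝ^{n-1}` (the `x'` variables) into `ℝⁿ`, orthogonal to the unit vector `ν`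
(the positive `xₙ`-direction, pointing into `Ω`), the origin of coordinates is `ξ`,
and near `ξ` the boundary `∂Ω` is the graph `xₙ = ρ(x')` for `|x'| < δ`, with `Ω` lying
above the graph. -/
def IsLocalCoord (n : ℕ) (Ω : Set (Euc n)) (ξ : Euc n)
    (f : Euc' n →ₗᵢ[ℝ] Euc n) (ν : Euc n) (δ : ℝ) (ρ : Euc' n → ℝ) : Prop :=
  0 < δ ∧ ‖ν‖ = 1 ∧ (∀ x' : Euc' n, ⟪f x', ν⟫ = 0) ∧ ρ 0 = 0 ∧
    (∀ x' : Euc' n, ‖x'‖ < δ → ξ + f x' + ρ x' • ν ∈ frontier Ω) ∧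
    ∃ U ∈ 𝓝 ξ, ∀ x' : Euc' n, ‖x'‖ < δ → ∀ t : ℝ, ξ + f x' + t • ν ∈ U →
      ((ξ + f x' + t • ν ∈ Ω ↔ ρ x' < t) ∧ (ξ + f x' + t • ν ∈ frontier Ω ↔ t = ρ x'))

/-- `∂Ω` is of class `C^k`: near every boundary point, `∂Ω` is the graph of a `C^k`
function `ρ` in a local coordinate system (with `D'ρ(0') = 0`). -/
def CkBoundary (n : ℕ) (k : ℕ∞) (Ω : Set (Euc n)) : Prop :=
  ∀ ξ ∈ frontier Ω, ∃ f ν δ ρ, IsLocalCoord n Ω ξ f ν δ ρ ∧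
    ContDiffOn ℝ k ρ (ball 0 δ) ∧ fderivWithin ℝ ρ (ball 0 δ) 0 = 0

/-- `φ` is semi-convex with respect to `∂Ω` at `ξ`: in a local coordinate system at `ξ`,
`ψ(x') := φ(x', ρ(x'))` satisfies `ψ(x') + (K/2)|x'|²` convex on `B'_δ(0')` for some `K > 0`. -/
def SemiconvexAt (n : ℕ) (Ω : Set (Euc n)) (φ : Euc n → ℝ) (ξ : Euc n) : Prop :=
  ∃ f ν δ ρ, IsLocalCoord n Ω ξ f ν δ ρ ∧ ∃ K > 0,
    ConvexOn ℝ (ball (0 : Euc' n) δ)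
      (fun x' => φ (ξ + f x' + ρ x' • ν) + K / 2 * ‖x'‖ ^ 2)

/-- `φ` is semi-convex with respect to `∂Ω`. -/
def SemiconvexBdry (n : ℕ) (Ω : Set (Euc n)) (φ : Euc n → ℝ) : Prop :=
  ∀ ξ ∈ frontier Ω, SemiconvexAt n Ω φ ξ

/-- `Ω` satisfies an enclosing sphere condition at `ξ ∈ ∂Ω` with radius `r`:
there is a ball `B_r(y) ⊇ Ω` with `ξ ∈ ∂B_r(y)`. -/
def EnclosingSphereAt (n : ℕ) (Ω : Set (Euc n)) (ξ : Euc n) (r : ℝ) : Prop :=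
  0 < r ∧ ∃ y : Euc n, Ω ⊆ ball y r ∧ dist ξ y = r

/-- `Ω` satisfies a uniform enclosing sphere condition. -/
def UnifEnclosingSphere (n : ℕ) (Ω : Set (Euc n)) : Prop :=
  ∃ R : ℝ, ∀ ξ ∈ frontier Ω, ∃ r ≤ R, EnclosingSphereAt n Ω ξ r

/-- `u ∈ C⁰(ℝⁿ \ Ω)` is a viscosity solution of the exterior Dirichlet problem
`det D²u = 1` in `ℝⁿ \ Ω̄`, `u = φ` on `∂Ω`, `u(x) - g(x) → 0` as `|x| → ∞`. -/
def SolvesMA (n : ℕ) (Ω : Set (Euc n)) (φ g u : Euc n → ℝ) : Prop :=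
  ContinuousOn u Ωᶜ ∧ ViscSol n (closure Ω)ᶜ u ∧ (∀ x ∈ frontier Ω, u x = φ x) ∧
    Tendsto (fun x => u x - g x) (cocompact (Euc n)) (𝓝 0)

/-- The prescribed quadratic asymptotic profile `(1/2) x A xᵀ + b ⬝ x + c`. -/
def quadAsym (n : ℕ) (A : Matrix (Fin n) (Fin n) ℝ) (b : Euc n) (c : ℝ) (x : Euc n) : ℝ :=
  (1 / 2) * ∑ i, ∑ j, x i * A i j * x j + ⟪b, x⟫ + c

/-- The family `S_c^φ` of subfunctions: continuous on `ℝⁿ \ Ω`, viscosity subsolutions in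
`ℝⁿ \ Ω̄`, `≤ φ` on `∂Ω`, with `limsup_{|x|→∞} (v(x) - |x|²/2) ≤ c`. -/
def Sset (n : ℕ) (Ω : Set (Euc n)) (φ : Euc n → ℝ) (c : ℝ) : Set (Euc n → ℝ) :=
  {v | ContinuousOn v Ωᶜ ∧ ViscSubsol n (closure Ω)ᶜ v ∧ (∀ x ∈ frontier Ω, v x ≤ φ x) ∧
    ∀ ε > 0, ∀ᶠ x in cocompact (Euc n), v x - ‖x‖ ^ 2 / 2 ≤ c + ε}

/-- The Perron solution `u(x) = sup { v(x) : v ∈ S_c^φ }`. -/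
def perron (n : ℕ) (Ω : Set (Euc n)) (φ : Euc n → ℝ) (c : ℝ) (x : Euc n) : ℝ :=
  sSup ((fun v => v x) '' Sset n Ω φ c)

section AuxLemmas

open Set Metric

/-- Maximum principle for locally midpoint-subaffine functions on an interval. -/
lemma nonpos_of_local_midpoint {x y : ℝ} (hxy : x < y) (φ : ℝ → ℝ)
    (hc : ContinuousOn φ (Set.Icc x y)) (hx0 : φ x = 0) (hy0 : φ y = 0)
    (hloc : ∀ m ∈ Set.Ioo x y, ∃ ε > 0, ∀ η : ℝ, 0 < η → η ≤ ε →
      x ≤ m - η → m + η ≤ y → φ m ≤ (φ (m - η) + φ (m + η)) / 2) :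
    ∀ z ∈ Set.Icc x y, φ z ≤ 0 := by
  intro z hz
  by_contra hpos
  push_neg at hpos
  obtain ⟨m₀, hm₀, hmax⟩ := (isCompact_Icc (a := x) (b := y)).exists_isMaxOn
    (nonempty_Icc.2 hxy.le) hc
  have hmax' : ∀ s ∈ Icc x y, φ s ≤ φ m₀ := hmax
  have hMpos : 0 < φ m₀ := lt_of_lt_of_le hpos (hmax' z hz)
  have hTc : IsClosed {s | s ∈ Icc x y ∧ φ s = φ m₀} := by
    have : {s | s ∈ Icc x y ∧ φ s = φ m₀} = Icc x y ∩ φ ⁻¹' {φ m₀} := by ext s; simp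
    rw [this]
    exact hc.preimage_isClosed_of_isClosed isClosed_Icc isClosed_singleton
  have hTne : {s | s ∈ Icc x y ∧ φ s = φ m₀}.Nonempty := ⟨m₀, hm₀, rfl⟩
  have hTbdd : BddAbove {s | s ∈ Icc x y ∧ φ s = φ m₀} :=
    bddAbove_Icc.mono (fun s hs => hs.1)
  obtain ⟨hmIcc, hφm⟩ : sSup {s | s ∈ Icc x y ∧ φ s = φ m₀} ∈ _ :=
    hTc.csSup_mem hTne hTbdd
  set m := sSup {s | s ∈ Icc x y ∧ φ s = φ m₀} with hmdef
  have hmx : m ≠ x := by intro e; rw [e, hx0] at hφm; linarith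
  have hmy : m ≠ y := by intro e; rw [e, hy0] at hφm; linarith
  have hmo : m ∈ Ioo x y := ⟨lt_of_le_of_ne hmIcc.1 (Ne.symm hmx), lt_of_le_of_ne hmIcc.2 hmy⟩
  obtain ⟨ε, hε, hmid⟩ := hloc m hmo
  have hη0 : 0 < min ε (min (m - x) (y - m)) := by
    refine lt_min hε (lt_min ?_ ?_) <;> [linarith [hmo.1]; linarith [hmo.2]]
  set η := min ε (min (m - x) (y - m)) with hηdef
  have hηε : η ≤ ε := min_le_left _ _
  have hxη : x ≤ m - η := by
    have : η ≤ m - x := le_trans (min_le_right _ _) (min_le_left _ _)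
    linarith
  have hyη : m + η ≤ y := by
    have : η ≤ y - m := le_trans (min_le_right _ _) (min_le_right _ _)
    linarith
  have hhm := hmid η hη0 hηε hxη hyη
  have h1 : φ (m - η) ≤ φ m₀ := hmax' _ ⟨hxη, by linarith⟩
  have h2 : φ (m + η) < φ m₀ := by
    rcases lt_or_eq_of_le (hmax' (m + η) ⟨by linarith, hyη⟩) with hlt | heq
    · exact hlt
    · exfalso
      have hmem : m + η ∈ {s | s ∈ Icc x y ∧ φ s = φ m₀} := ⟨⟨by linarith, hyη⟩, heq⟩
      have := le_csSup hTbdd hmem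
      rw [← hmdef] at this
      linarith
  rw [hφm] at hhm
  linarith

/-- A continuous function on an interval satisfying a local symmetric midpoint
convexity condition at interior points is convex. -/
lemma convexOn_Icc_of_local_midpoint {a b : ℝ} (h : ℝ → ℝ)
    (hc : ContinuousOn h (Set.Icc a b))
    (hm : ∀ m ∈ Set.Ioo a b, ∃ ε > 0, ∀ η : ℝ, 0 < η → η ≤ ε →
       a ≤ m - η → m + η ≤ b → h m ≤ (h (m - η) + h (m + η)) / 2) :
    ConvexOn ℝ (Set.Icc a b) h := by
  have key : ∀ x ∈ Icc a b, ∀ y ∈ Icc a b, x < y → ∀ z ∈ Icc x y,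
      (y - x) * h z ≤ (y - z) * h x + (z - x) * h y := by
    intro x hx y hy hxy z hz
    have hIcc : Icc x y ⊆ Icc a b := Icc_subset_Icc hx.1 hy.2
    have hres : ∀ s ∈ Icc x y,
        (fun s => (y - x) * h s - ((y - s) * h x + (s - x) * h y)) s ≤ 0 := by
      apply nonpos_of_local_midpoint hxy
      · apply ContinuousOn.sub
        · exact continuousOn_const.mul (hc.mono hIcc)
        · fun_prop
      · ring_nf
      · ring_nf
      · intro m hmo
        have hmab : m ∈ Ioo a b := ⟨lt_of_le_of_lt hx.1 hmo.1, lt_of_lt_of_le hmo.2 hy.2⟩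
        obtain ⟨ε, hε, hmid⟩ := hm m hmab
        refine ⟨ε, hε, fun η hη0 hηε hxη hyη => ?_⟩
        have hhm := hmid η hη0 hηε (le_trans hx.1 hxη) (le_trans hyη hy.2)
        have hyx : (0:ℝ) < y - x := by linarith
        have h1 : (y - x) * h m ≤ (y - x) * ((h (m - η) + h (m + η)) / 2) :=
          mul_le_mul_of_nonneg_left hhm hyx.le
        nlinarith [h1]
    have h2 := hres z hz
    beta_reduce at h2
    linarith
  refine ⟨convex_Icc a b, ?_⟩
  intro x hx y hy p q hp hq hpq
  simp only [smul_eq_mul]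
  rcases lt_trichotomy x y with hlt | heq | hlt
  · have hyz : y - (p * x + q * y) = p * (y - x) := by linear_combination (-y) * hpq
    have hzx : (p * x + q * y) - x = q * (y - x) := by linear_combination x * hpq
    have hz1 : x ≤ p * x + q * y := by nlinarith
    have hz2 : p * x + q * y ≤ y := by nlinarith
    have hk := key x hx y hy hlt _ ⟨hz1, hz2⟩
    rw [hyz, hzx] at hk
    have hyx : (0:ℝ) < y - x := by linarith
    have : (y - x) * h (p * x + q * y) ≤ (y - x) * (p * h x + q * h y) := by
      calc (y - x) * h (p * x + q * y) ≤ p * (y - x) * h x + q * (y - x) * h y := hk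
        _ = (y - x) * (p * h x + q * h y) := by ring
    exact le_of_mul_le_mul_left this hyx
  · subst heq
    have hxx : p * x + q * x = x := by linear_combination x * hpq
    rw [hxx]
    have : p * h x + q * h x = h x := by linear_combination (h x) * hpq
    rw [this]
  · have hyz : x - (p * x + q * y) = q * (x - y) := by linear_combination (-x) * hpq
    have hzx : (p * x + q * y) - y = p * (x - y) := by linear_combination y * hpq
    have hz1 : y ≤ p * x + q * y := by nlinarith
    have hz2 : p * x + q * y ≤ x := by nlinarith
    have hk := key y hy x hx hlt _ ⟨hz1, hz2⟩
    rw [hyz, hzx] at hk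
    have hyx : (0:ℝ) < x - y := by linarith
    have : (x - y) * h (p * x + q * y) ≤ (x - y) * (p * h x + q * h y) := by
      calc (x - y) * h (p * x + q * y) ≤ q * (x - y) * h y + p * (x - y) * h x := hk
        _ = (x - y) * (p * h x + q * h y) := by ring
    exact le_of_mul_le_mul_left this hyx

variable {EE : Type*} [NormedAddCommGroup EE] [NormedSpace ℝ EE]

/-- Chord inequality for a locally convex function along a segment contained in `D`. -/
lemma chord_le_of_locallyConvex {D : Set EE} {u : EE → ℝ}
    (hlc : ∀ x ∈ D, ∃ r > 0, Metric.ball x r ⊆ D ∧ ConvexOn ℝ (Metric.ball x r) u)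
    (hcont : ContinuousOn u D) (p q : EE)
    (hseg : ∀ t ∈ Set.Icc (0:ℝ) 1, p + t • (q - p) ∈ D) :
    ∀ t ∈ Set.Icc (0:ℝ) 1, u (p + t • (q - p)) ≤ (1 - t) * u p + t * u q := by
  have hcc : ConvexOn ℝ (Icc (0:ℝ) 1) (fun s : ℝ => u (p + s • (q - p))) := by
    apply convexOn_Icc_of_local_midpoint
    · apply hcont.comp (by fun_prop) hseg
    · intro m hm
      obtain ⟨r, hr, hball, hconv⟩ := hlc (p + m • (q - p)) (hseg m ⟨hm.1.le, hm.2.le⟩)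
      refine ⟨r / (2 * (‖q - p‖ + 1)), by positivity, fun η hη0 hηε h0η hη1 => ?_⟩
      have hn0 : (0:ℝ) ≤ ‖q - p‖ := norm_nonneg _
      have hmemA : p + (m - η) • (q - p) ∈ ball (p + m • (q - p)) r := by
        rw [mem_ball_iff_norm]
        have : p + (m - η) • (q - p) - (p + m • (q - p)) = (-η) • (q - p) := by module
        rw [this, norm_smul]
        simp only [norm_neg, Real.norm_eq_abs, abs_of_pos hη0]
        calc η * ‖q - p‖ ≤ r / (2 * (‖q - p‖ + 1)) * ‖q - p‖ := by
              apply mul_le_mul_of_nonneg_right hηε hn0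
          _ < r := by
              rw [div_mul_eq_mul_div, div_lt_iff₀ (by positivity)]
              nlinarith
      have hmemB : p + (m + η) • (q - p) ∈ ball (p + m • (q - p)) r := by
        rw [mem_ball_iff_norm]
        have : p + (m + η) • (q - p) - (p + m • (q - p)) = η • (q - p) := by module
        rw [this, norm_smul]
        simp only [Real.norm_eq_abs, abs_of_pos hη0]
        calc η * ‖q - p‖ ≤ r / (2 * (‖q - p‖ + 1)) * ‖q - p‖ := by
              apply mul_le_mul_of_nonneg_right hηε hn0
          _ < r := by
              rw [div_mul_eq_mul_div, div_lt_iff₀ (by positivity)]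
              nlinarith
      have hmid : p + m • (q - p) =
          (1/2 : ℝ) • (p + (m - η) • (q - p)) + (1/2 : ℝ) • (p + (m + η) • (q - p)) := by
        module
      have := hconv.2 hmemA hmemB (by norm_num : (0:ℝ) ≤ 1/2) (by norm_num : (0:ℝ) ≤ 1/2)
        (by norm_num)
      rw [← hmid] at this
      simp only [smul_eq_mul] at this
      linarith
  intro t ht
  have h0 : (0:ℝ) ∈ Icc (0:ℝ) 1 := by norm_num
  have h1 : (1:ℝ) ∈ Icc (0:ℝ) 1 := by norm_num
  have := hcc.2 h0 h1 (by linarith [ht.2] : (0:ℝ) ≤ 1 - t) ht.1 (by ring)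
  simp only [smul_eq_mul, mul_zero, mul_one, zero_add] at this
  simpa using this

/-- Taylor bound for a function with Lipschitz derivative on a convex set. -/
lemma taylor_sub_bound {f : EE → ℝ} {s : Set EE} (hs : Convex ℝ s)
    {f' : EE → EE →L[ℝ] ℝ} (hder : ∀ x ∈ s, HasFDerivAt f (f' x) x)
    {L : ℝ} (hL0 : 0 ≤ L) (hL : ∀ x ∈ s, ∀ y ∈ s, ‖f' x - f' y‖ ≤ L * ‖x - y‖) :
    ∀ x ∈ s, ∀ y ∈ s, |f y - f x - f' x (y - x)| ≤ L * ‖y - x‖^2 := by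
  intro x hx y hy
  have hsub : segment ℝ x y ⊆ s := hs.segment_subset hx hy
  have hkey : ‖(f y - f' x y) - (f x - f' x x)‖ ≤ (L * ‖y - x‖) * ‖y - x‖ := by
    apply Convex.norm_image_sub_le_of_norm_hasFDerivWithin_le
      (f := fun z => f z - f' x z) (f' := fun z => f' z - f' x) (s := segment ℝ x y)
      (fun z hz => ((hder z (hsub hz)).sub ((f' x).hasFDerivAt)).hasFDerivWithinAt)
      ?_ (convex_segment x y) (left_mem_segment ℝ x y) (right_mem_segment ℝ x y)
    intro z hz
    obtain ⟨a, b, ha, hb, hab, rfl⟩ := hz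
    have hzx : a • x + b • y - x = b • (y - x) := by
      have : a = 1 - b := by linarith
      rw [this]; module
    calc ‖f' (a • x + b • y) - f' x‖ ≤ L * ‖a • x + b • y - x‖ :=
          hL _ (hsub ⟨a, b, ha, hb, hab, rfl⟩) x hx
      _ = L * (b * ‖y - x‖) := by rw [hzx, norm_smul, Real.norm_eq_abs, abs_of_nonneg hb]
      _ ≤ L * ‖y - x‖ := by nlinarith [mul_nonneg hL0 (norm_nonneg (y - x)), ha, hab]
  have : (f y - f' x y) - (f x - f' x x) = f y - f x - f' x (y - x) := by
    rw [_root_.map_sub]; ring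
  rw [this, Real.norm_eq_abs] at hkey
  calc |f y - f x - f' x (y - x)| ≤ (L * ‖y - x‖) * ‖y - x‖ := hkey
    _ = L * ‖y - x‖^2 := by ring

/-- Chord gap bound for a function with Lipschitz derivative on a convex set. -/
lemma chord_gap_bound {f : EE → ℝ} {s : Set EE} (hs : Convex ℝ s)
    {f' : EE → EE →L[ℝ] ℝ} (hder : ∀ x ∈ s, HasFDerivAt f (f' x) x)
    {L : ℝ} (hL0 : 0 ≤ L) (hL : ∀ x ∈ s, ∀ y ∈ s, ‖f' x - f' y‖ ≤ L * ‖x - y‖) :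
    ∀ x ∈ s, ∀ y ∈ s, ∀ t ∈ Set.Icc (0:ℝ) 1,
      |(1 - t) * f x + t * f y - f (x + t • (y - x))| ≤ 2 * L * ‖x - y‖^2 := by
  intro x hx y hy t ht
  obtain ⟨ht0, ht1⟩ := ht
  set m := x + t • (y - x) with hmdef
  have hms : m ∈ s := by
    have : m = (1 - t) • x + t • y := by rw [hmdef]; module
    rw [this]
    exact hs hx hy (by linarith) ht0 (by ring)
  have e1 := taylor_sub_bound hs hder hL0 hL m hms x hx
  have e2 := taylor_sub_bound hs hder hL0 hL m hms y hy
  have hxm : x - m = (-t) • (y - x) := by rw [hmdef]; module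
  have hym : y - m = (1 - t) • (y - x) := by rw [hmdef]; module
  rw [hxm, _root_.map_smul] at e1
  rw [hym, _root_.map_smul] at e2
  have hnxm : ‖(-t) • (y - x)‖ = t * ‖y - x‖ := by
    rw [norm_smul, Real.norm_eq_abs, abs_neg, abs_of_nonneg ht0]
  have hnym : ‖(1 - t) • (y - x)‖ = (1 - t) * ‖y - x‖ := by
    rw [norm_smul, Real.norm_eq_abs, abs_of_nonneg (by linarith)]
  rw [hnxm] at e1
  rw [hnym] at e2
  rw [abs_le] at e1 e2 ⊢
  obtain ⟨e1l, e1r⟩ := e1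
  obtain ⟨e2l, e2r⟩ := e2
  have hnn : (0:ℝ) ≤ ‖y - x‖ := norm_nonneg _
  have hrev : ‖x - y‖ = ‖y - x‖ := norm_sub_rev x y
  simp only [smul_eq_mul] at e1l e1r e2l e2r
  constructor
  · rw [hrev]; nlinarith [mul_nonneg ht0 (mul_nonneg hL0 (mul_nonneg hnn hnn))]
  · rw [hrev]; nlinarith [mul_nonneg ht0 (mul_nonneg hL0 (mul_nonneg hnn hnn))]

lemma convexOn_congr' {EE' : Type*} [NormedAddCommGroup EE'] [NormedSpace ℝ EE']
    {s : Set EE'} {f g : EE' → ℝ} (hf : ConvexOn ℝ s f) (hfg : ∀ x ∈ s, f x = g x) :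
    ConvexOn ℝ s g := by
  refine ⟨hf.1, fun x hx y hy p q hp hq hpq => ?_⟩
  have hz : p • x + q • y ∈ s := hf.1 hx hy hp hq hpq
  rw [← hfg _ hx, ← hfg _ hy, ← hfg _ hz]
  exact hf.2 hx hy hp hq hpq

end AuxLemmas

set_option maxHeartbeats 4000000 in
/-- If `Ω ⊆ ℝⁿ` (`n ≥ 3`) is a bounded convex domain with `C³` boundary,
`u ∈ C⁰(ℝⁿ \ Ω)` is locally convex in `ℝⁿ \ Ω̄`, and `φ := u` on `∂Ω`,
then `φ` is semi-convex with respect to `∂Ω`. -/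
theorem locally_convex_boundary_semiconvex
    (n : ℕ) (hn : 3 ≤ n) (Ω : Set (Euc n)) (hΩo : IsOpen Ω) (hΩne : Ω.Nonempty)
    (hΩcvx : Convex ℝ Ω) (hΩb : IsBounded Ω) (hC3 : CkBoundary n 3 Ω)
    (u φ : Euc n → ℝ) (hu : ContinuousOn u Ωᶜ)
    (hlc : LocallyConvexOn' n (closure Ω)ᶜ u) (hbc : ∀ x ∈ frontier Ω, φ x = u x) :
    SemiconvexBdry n Ω φ := by
  intro ξ hξ
  obtain ⟨f, ν, δ, ρ, hic, hρC3, hdρ0⟩ := hC3 ξ hξ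
  obtain ⟨hδ, hν, horth, hρ0, hfr, U, hU, hchar⟩ := hic
  obtain ⟨εU, hεU, hballU⟩ := Metric.mem_nhds_iff.1 hU
  have hDΩc : (closure Ω)ᶜ ⊆ Ωᶜ := Set.compl_subset_compl.2 subset_closure
  have huD : ContinuousOn u (closure Ω)ᶜ := hu.mono hDΩc
  -- Φ(x', t) := ξ + f x' + t • ν, norm estimate
  have hΦnorm : ∀ (x' : Euc' n) (t : ℝ), ‖(ξ + f x' + t • ν) - ξ‖ ≤ ‖x'‖ + |t| := by
    intro x' t
    have h1 : ξ + f x' + t • ν - ξ = f x' + t • ν := by module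
    rw [h1]
    calc ‖f x' + t • ν‖ ≤ ‖f x'‖ + ‖t • ν‖ := norm_add_le _ _
      _ = ‖x'‖ + |t| := by rw [f.norm_map, norm_smul, Real.norm_eq_abs, hν, mul_one]
  -- smallness of ρ near 0
  have hρcont : ContinuousOn ρ (Metric.ball 0 δ) := hρC3.continuousOn
  have hcw : Filter.Tendsto ρ (𝓝[Metric.ball (0:Euc' n) δ] 0) (𝓝 0) := by
    have := hρcont 0 (Metric.mem_ball_self hδ)
    rwa [ContinuousWithinAt, hρ0] at this
  have hevρ : ∀ᶠ x' in 𝓝[Metric.ball (0:Euc' n) δ] (0:Euc' n), |ρ x'| < εU/8 := by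
    have := Metric.tendsto_nhds.1 hcw (εU/8) (by positivity)
    filter_upwards [this] with x' hx'
    rwa [Real.dist_eq, sub_zero] at hx'
  rw [eventually_nhdsWithin_iff] at hevρ
  obtain ⟨δρ, hδρ0, hδρ⟩ := Metric.eventually_nhds_iff.1 hevρ
  -- constants
  set dE := εU/4 with hdEdef
  have hdEpos : 0 < dE := by rw [hdEdef]; positivity
  set δ₂ := min (δ/2) (min (εU/8) (δρ/2)) with hδ₂def
  have hδ₂pos : 0 < δ₂ := by
    rw [hδ₂def]
    exact lt_min (by linarith) (lt_min (by linarith) (by linarith))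
  have hδ₂δ : δ₂ < δ := by
    have h1 : δ₂ ≤ δ/2 := by rw [hδ₂def]; exact min_le_left _ _
    linarith
  have hδ₂εU : δ₂ ≤ εU/8 := by
    rw [hδ₂def]; exact le_trans (min_le_right _ _) (min_le_left _ _)
  have hδ₂δρ : δ₂ ≤ δρ/2 := by
    rw [hδ₂def]; exact le_trans (min_le_right _ _) (min_le_right _ _)
  clear_value dE δ₂
  have hcbsub : Metric.closedBall (0:Euc' n) δ₂ ⊆ Metric.ball 0 δ := by
    intro x hx
    rw [Metric.mem_closedBall, dist_zero_right] at hx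
    rw [Metric.mem_ball, dist_zero_right]
    linarith
  have hρb : ∀ x' : Euc' n, ‖x'‖ ≤ δ₂ → |ρ x'| ≤ εU/8 := by
    intro x' h
    have h1 : dist x' 0 < δρ := by rw [dist_zero_right]; linarith
    have h2 : x' ∈ Metric.ball (0:Euc' n) δ := by
      rw [Metric.mem_ball, dist_zero_right]; linarith
    exact (hδρ h1 h2).le
  have hUmem : ∀ (x' : Euc' n) (t : ℝ), ‖x'‖ ≤ δ₂ → |t| ≤ εU/2 → ξ + f x' + t • ν ∈ U := by
    intro x' t hx ht
    apply hballU
    rw [Metric.mem_ball, dist_eq_norm]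
    have := hΦnorm x' t
    have hδ2 : δ₂ ≤ εU/8 := hδ₂εU
    linarith
  -- exterior points
  have hext : ∀ (x' : Euc' n) (t : ℝ), ‖x'‖ ≤ δ₂ → ρ x' - dE ≤ t → t < ρ x' →
      ξ + f x' + t • ν ∈ (closure Ω)ᶜ ∧ ξ + f x' + t • ν ∈ Metric.closedBall ξ (εU/2) := by
    intro x' t hx ht1 ht2
    have hρx := hρb x' hx
    have hρx' := abs_le.1 hρx
    have habs : |t| ≤ 3*εU/8 := by
      rw [abs_le]
      constructor
      · rw [hdEdef] at ht1; linarith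
      · linarith
    have hUm := hUmem x' t hx (by linarith [abs_le.1 habs, abs_nonneg t, hεU] : |t| ≤ εU/2)
    have hch := hchar x' (lt_of_le_of_lt hx hδ₂δ) t hUm
    constructor
    · rw [Set.mem_compl_iff, closure_eq_self_union_frontier]
      rintro (hmem | hmem)
      · have := hch.1.1 hmem; linarith
      · have := hch.2.1 hmem; linarith
    · rw [Metric.mem_closedBall, dist_eq_norm]
      refine le_trans (hΦnorm x' t) ?_
      have := abs_le.1 habs
      linarith
  -- points just inside Ω
  have hΩmem : ∀ (x' : Euc' n) (e : ℝ), ‖x'‖ ≤ δ₂ → 0 < e → e ≤ dE →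
      ξ + f x' + (ρ x' + e) • ν ∈ Ω := by
    intro x' e hx he1 he2
    have hρx' := abs_le.1 (hρb x' hx)
    have habs : |ρ x' + e| ≤ εU/2 := by
      rw [abs_le]; rw [hdEdef] at he2; constructor <;> linarith
    have hUm := hUmem x' _ hx habs
    exact (hchar x' (lt_of_le_of_lt hx hδ₂δ) _ hUm).1.2 (by linarith)
  -- midpoint convexity of ρ
  have hρmid : ∀ x1 x2 : Euc' n, ‖x1‖ ≤ δ₂ → ‖x2‖ ≤ δ₂ →
      ρ ((1/2:ℝ)•x1 + (1/2:ℝ)•x2) ≤ (ρ x1 + ρ x2)/2 := by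
    intro x1 x2 h1 h2
    have hmidn : ‖(1/2:ℝ)•x1 + (1/2:ℝ)•x2‖ ≤ δ₂ := by
      calc ‖(1/2:ℝ)•x1 + (1/2:ℝ)•x2‖ ≤ ‖(1/2:ℝ)•x1‖ + ‖(1/2:ℝ)•x2‖ := norm_add_le _ _
        _ ≤ δ₂ := by
            rw [norm_smul, norm_smul, Real.norm_eq_abs,
              abs_of_pos (by norm_num : (0:ℝ) < (1/2:ℝ))]
            linarith
    by_contra hgt
    push_neg at hgt
    set e := min dE ((ρ ((1/2:ℝ)•x1 + (1/2:ℝ)•x2) - (ρ x1 + ρ x2)/2)/2) with hedef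
    have he1 : 0 < e := by
      rw [hedef]; exact lt_min hdEpos (by linarith)
    have he2 : e ≤ dE := by rw [hedef]; exact min_le_left _ _
    have he3 : e ≤ (ρ ((1/2:ℝ)•x1 + (1/2:ℝ)•x2) - (ρ x1 + ρ x2)/2)/2 := by
      rw [hedef]; exact min_le_right _ _
    have hA : ξ + f x1 + (ρ x1 + e) • ν ∈ Ω := hΩmem x1 e h1 he1 he2
    have hB : ξ + f x2 + (ρ x2 + e) • ν ∈ Ω := hΩmem x2 e h2 he1 he2
    have hP := hΩcvx hA hB (by norm_num : (0:ℝ) ≤ 1/2) (by norm_num : (0:ℝ) ≤ 1/2) (by norm_num)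
    have heq : (1/2:ℝ)•(ξ + f x1 + (ρ x1 + e)•ν) + (1/2:ℝ)•(ξ + f x2 + (ρ x2 + e)•ν)
        = ξ + f ((1/2:ℝ)•x1 + (1/2:ℝ)•x2) + ((ρ x1 + ρ x2)/2 + e)•ν := by
      simp only [_root_.map_add, _root_.map_smul]
      module
    rw [heq] at hP
    have hρmb := abs_le.1 (hρb _ hmidn)
    have hρ1b := abs_le.1 (hρb _ h1)
    have hρ2b := abs_le.1 (hρb _ h2)
    have habs : |(ρ x1 + ρ x2)/2 + e| ≤ εU/2 := by
      rw [abs_le]; rw [hdEdef] at he2; constructor <;> linarith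
    have hUm := hUmem _ _ hmidn habs
    have := (hchar _ (lt_of_le_of_lt hmidn hδ₂δ) _ hUm).1.1 hP
    linarith
  -- derivative facts
  have hder : ∀ x' ∈ Metric.ball (0:Euc' n) δ, HasFDerivAt ρ (fderiv ℝ ρ x') x' := by
    intro x' hx'
    have h1 : ContDiffAt ℝ 3 ρ x' := hρC3.contDiffAt (Metric.isOpen_ball.mem_nhds hx')
    exact (h1.differentiableAt (by norm_num)).hasFDerivAt
  have hρ'cd : ContDiffOn ℝ 2 (fderiv ℝ ρ) (Metric.ball 0 δ) :=
    hρC3.fderiv_of_isOpen Metric.isOpen_ball (by norm_num)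
  have hρ''cont : ContinuousOn (fderiv ℝ (fderiv ℝ ρ)) (Metric.ball 0 δ) :=
    (hρ'cd.fderiv_of_isOpen (m := 1) Metric.isOpen_ball (by norm_num)).continuousOn
  obtain ⟨C2, hC2⟩ := (isCompact_closedBall (0:Euc' n) δ₂).exists_bound_of_continuousOn
    (f := fderiv ℝ (fderiv ℝ ρ)) (hρ''cont.mono hcbsub)
  set L := max C2 0 + 1 with hLdef
  have hLpos : 0 < L := by
    have : (0:ℝ) ≤ max C2 0 := le_max_right _ _
    rw [hLdef]; linarith
  have hLip : ∀ x ∈ Metric.closedBall (0:Euc' n) δ₂, ∀ y ∈ Metric.closedBall (0:Euc' n) δ₂,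
      ‖fderiv ℝ ρ x - fderiv ℝ ρ y‖ ≤ L * ‖x - y‖ := by
    intro xx hxx yy hyy
    exact Convex.norm_image_sub_le_of_norm_hasFDerivWithin_le
      (f := fderiv ℝ ρ) (f' := fun z => fderiv ℝ (fderiv ℝ ρ) z)
      (fun z hz => (((hρ'cd.contDiffAt (Metric.isOpen_ball.mem_nhds
        (hcbsub hz))).differentiableAt (by norm_num)).hasFDerivAt).hasFDerivWithinAt)
      (fun z hz => le_trans (hC2 z hz) (by rw [hLdef]; linarith [le_max_left C2 (0:ℝ)]))
      (convex_closedBall _ _) hyy hxx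
  have hchord : ∀ a ∈ Metric.closedBall (0:Euc' n) δ₂, ∀ b ∈ Metric.closedBall (0:Euc' n) δ₂,
      ∀ t ∈ Set.Icc (0:ℝ) 1,
      |(1 - t) * ρ a + t * ρ b - ρ (a + t • (b - a))| ≤ 2 * L * ‖a - b‖^2 :=
    chord_gap_bound (convex_closedBall _ _) (fun x hx => hder x (hcbsub hx)) hLpos.le hLip
  clear_value L
  -- bound on u
  have hKcomp : IsCompact (Metric.closedBall ξ εU ∩ Ωᶜ) :=
    (isCompact_closedBall _ _).inter_right (isClosed_compl_iff.2 hΩo)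
  obtain ⟨B₀, hB₀⟩ := hKcomp.exists_bound_of_continuousOn (hu.mono Set.inter_subset_right)
  set B := max B₀ 1 with hBdef
  have hBpos : 0 < B := lt_of_lt_of_le zero_lt_one (by rw [hBdef]; exact le_max_right _ _)
  have hBu : ∀ x ∈ Metric.closedBall ξ εU ∩ Ωᶜ, |u x| ≤ B := by
    intro x hx
    have h1 : ‖u x‖ ≤ B₀ := hB₀ x hx
    rw [Real.norm_eq_abs] at h1
    rw [hBdef]
    exact le_trans h1 (le_max_left _ _)
  clear_value B
  -- line parametrization
  have hline : ∀ (a b : Euc' n) (s t1 t2 : ℝ),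
      (ξ + f a + t1 • ν) + s • ((ξ + f b + t2 • ν) - (ξ + f a + t1 • ν))
        = ξ + f (a + s • (b - a)) + ((1-s)*t1 + s*t2) • ν := by
    intro a b s t1 t2
    simp only [_root_.map_add, _root_.map_smul, _root_.map_sub]
    module
  have hsegcb : ∀ a ∈ Metric.closedBall (0:Euc' n) δ₂, ∀ b ∈ Metric.closedBall (0:Euc' n) δ₂,
      ∀ s ∈ Set.Icc (0:ℝ) 1, a + s•(b-a) ∈ Metric.closedBall (0:Euc' n) δ₂ := by
    intro a ha b hb s hs
    have h1 : a + s•(b-a) = (1-s)•a + s•b := by module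
    rw [h1]
    exact convex_closedBall _ _ ha hb (by linarith [hs.2]) hs.1 (by ring)
  -- the key midpoint estimate
  have hmidC : ∀ τ : ℝ, 0 < τ → τ ≤ dE/2 →
      ∀ x1 ∈ Metric.closedBall (0:Euc' n) δ₂, ∀ x2 ∈ Metric.closedBall (0:Euc' n) δ₂,
      2*L*‖x1 - x2‖^2 < τ →
      u (ξ + f ((1/2:ℝ)•x1 + (1/2:ℝ)•x2) + (ρ ((1/2:ℝ)•x1 + (1/2:ℝ)•x2) - τ) • ν)
        ≤ (u (ξ + f x1 + (ρ x1 - τ) • ν) + u (ξ + f x2 + (ρ x2 - τ) • ν))/2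
          + (8*B*L/dE) * ‖x1 - x2‖^2 := by
    intro τ hτ0 hτE x1 hx1 x2 hx2 hsmall
    have hx1n : ‖x1‖ ≤ δ₂ := by rwa [Metric.mem_closedBall, dist_zero_right] at hx1
    have hx2n : ‖x2‖ ≤ δ₂ := by rwa [Metric.mem_closedBall, dist_zero_right] at hx2
    have hx0 : (1/2:ℝ)•x1 + (1/2:ℝ)•x2 ∈ Metric.closedBall (0:Euc' n) δ₂ :=
      convex_closedBall _ _ hx1 hx2 (by norm_num) (by norm_num) (by norm_num)
    have hx0n : ‖(1/2:ℝ)•x1 + (1/2:ℝ)•x2‖ ≤ δ₂ := by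
      rwa [Metric.mem_closedBall, dist_zero_right] at hx0
    have hd2nn : (0:ℝ) ≤ ‖x1 - x2‖^2 := sq_nonneg _
    -- chord estimate at the midpoint
    have hcd : (ρ x1 + ρ x2)/2 - ρ ((1/2:ℝ)•x1 + (1/2:ℝ)•x2) ≤ 2*L*‖x1-x2‖^2 := by
      have h12 : (1/2:ℝ) ∈ Set.Icc (0:ℝ) 1 := by norm_num
      have hc := hchord x1 hx1 x2 hx2 (1/2) h12
      have hxeq : x1 + (1/2:ℝ)•(x2 - x1) = (1/2:ℝ)•x1 + (1/2:ℝ)•x2 := by module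
      rw [hxeq] at hc
      have := abs_le.1 hc
      linarith [this.2]
    have hρ0c : ρ ((1/2:ℝ)•x1 + (1/2:ℝ)•x2) ≤ (ρ x1 + ρ x2)/2 := hρmid x1 x2 hx1n hx2n
    -- the segment between the two pushed-down boundary points is exterior
    have hsegAB : ∀ s ∈ Set.Icc (0:ℝ) 1,
        (ξ + f x1 + (ρ x1 - τ)•ν) + s • ((ξ + f x2 + (ρ x2 - τ)•ν) - (ξ + f x1 + (ρ x1 - τ)•ν))
          ∈ (closure Ω)ᶜ := by
      intro s hs
      rw [hline]
      have hcb := hsegcb x1 hx1 x2 hx2 s hs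
      have hcbn : ‖x1 + s•(x2-x1)‖ ≤ δ₂ := by
        rwa [Metric.mem_closedBall, dist_zero_right] at hcb
      have hch := abs_le.1 (hchord x1 hx1 x2 hx2 s hs)
      have hcoef : (1-s)*(ρ x1 - τ) + s*(ρ x2 - τ) = ((1-s)*ρ x1 + s*ρ x2) - τ := by ring
      rw [hcoef]
      exact (hext _ _ hcbn (by linarith [hch.1]) (by linarith [hch.2])).1
    have hchordAB := chord_le_of_locallyConvex hlc huD _ _ hsegAB (1/2) (by norm_num)
    have hmAB : (ξ + f x1 + (ρ x1 - τ)•ν) + (1/2:ℝ) •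
        ((ξ + f x2 + (ρ x2 - τ)•ν) - (ξ + f x1 + (ρ x1 - τ)•ν))
        = ξ + f ((1/2:ℝ)•x1 + (1/2:ℝ)•x2) + ((ρ x1 + ρ x2)/2 - τ) • ν := by
      rw [hline]
      have h1 : x1 + (1/2:ℝ)•(x2 - x1) = (1/2:ℝ)•x1 + (1/2:ℝ)•x2 := by module
      have h2 : (1-(1/2:ℝ))*(ρ x1 - τ) + (1/2:ℝ)*(ρ x2 - τ) = (ρ x1 + ρ x2)/2 - τ := by ring
      rw [h1, h2]
    rw [hmAB] at hchordAB
    -- vertical comparison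
    set c := (ρ x1 + ρ x2)/2 with hcdef
    set ρ₀ := ρ ((1/2:ℝ)•x1 + (1/2:ℝ)•x2) with hρ₀def
    have hden : 0 < dE - τ + (c - ρ₀) := by linarith
    set tst := (c - ρ₀)/(dE - τ + (c - ρ₀)) with htstdef
    have htst0 : 0 ≤ tst := div_nonneg (by linarith) hden.le
    have htst1 : tst ≤ 1 := by rw [htstdef, div_le_one hden]; linarith
    clear_value c ρ₀ tst
    have hsegV : ∀ s ∈ Set.Icc (0:ℝ) 1,
        (ξ + f ((1/2:ℝ)•x1 + (1/2:ℝ)•x2) + (c - τ)•ν) + s •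
          ((ξ + f ((1/2:ℝ)•x1 + (1/2:ℝ)•x2) + (ρ₀ - dE)•ν)
            - (ξ + f ((1/2:ℝ)•x1 + (1/2:ℝ)•x2) + (c - τ)•ν)) ∈ (closure Ω)ᶜ := by
      intro s hs
      rw [hline]
      have h1 : (1/2:ℝ)•x1 + (1/2:ℝ)•x2 + s•((1/2:ℝ)•x1 + (1/2:ℝ)•x2 - ((1/2:ℝ)•x1 + (1/2:ℝ)•x2))
          = (1/2:ℝ)•x1 + (1/2:ℝ)•x2 := by module
      rw [h1]
      refine (hext _ _ hx0n ?_ ?_).1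
      · nlinarith [hs.1, hs.2]
      · nlinarith [hs.1, hs.2]
    have hchordV := chord_le_of_locallyConvex hlc huD _ _ hsegV tst ⟨htst0, htst1⟩
    have hmV : (ξ + f ((1/2:ℝ)•x1 + (1/2:ℝ)•x2) + (c - τ)•ν) + tst •
        ((ξ + f ((1/2:ℝ)•x1 + (1/2:ℝ)•x2) + (ρ₀ - dE)•ν)
          - (ξ + f ((1/2:ℝ)•x1 + (1/2:ℝ)•x2) + (c - τ)•ν))
        = ξ + f ((1/2:ℝ)•x1 + (1/2:ℝ)•x2) + (ρ₀ - τ) • ν := by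
      have hsc : ρ₀ - τ = (c - τ) + tst * ((ρ₀ - dE) - (c - τ)) := by
        rw [htstdef]; field_simp; ring
      rw [hsc, hline]
      have h1 : (1/2:ℝ)•x1 + (1/2:ℝ)•x2 + tst•((1/2:ℝ)•x1 + (1/2:ℝ)•x2 - ((1/2:ℝ)•x1 + (1/2:ℝ)•x2))
          = (1/2:ℝ)•x1 + (1/2:ℝ)•x2 := by module
      rw [h1]
      have h2 : (1-tst)*(c - τ) + tst*(ρ₀ - dE) = (c - τ) + tst * ((ρ₀ - dE) - (c - τ)) := by ring
      rw [h2]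
    rw [hmV] at hchordV
    -- membership bounds
    have hPtop := hext ((1/2:ℝ)•x1 + (1/2:ℝ)•x2) (c - τ) hx0n (by linarith) (by linarith)
    have hPlow := hext ((1/2:ℝ)•x1 + (1/2:ℝ)•x2) (ρ₀ - dE) hx0n (by linarith) (by linarith)
    have hBtop : |u (ξ + f ((1/2:ℝ)•x1 + (1/2:ℝ)•x2) + (c - τ)•ν)| ≤ B :=
      hBu _ ⟨Metric.closedBall_subset_closedBall (by linarith) hPtop.2, hDΩc hPtop.1⟩
    have hBlow : |u (ξ + f ((1/2:ℝ)•x1 + (1/2:ℝ)•x2) + (ρ₀ - dE)•ν)| ≤ B :=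
      hBu _ ⟨Metric.closedBall_subset_closedBall (by linarith) hPlow.2, hDΩc hPlow.1⟩
    have htstb : tst * dE ≤ 4*L*‖x1-x2‖^2 := by
      rw [htstdef, div_mul_eq_mul_div, div_le_iff₀ hden]
      have h4L : (0:ℝ) ≤ 4*L*‖x1-x2‖^2 := by positivity
      have e1 : c - ρ₀ ≤ 2*L*‖x1-x2‖^2 := by linarith
      have e2 : dE/2 ≤ dE - τ := by linarith
      have s0 : (2*L*‖x1-x2‖^2)*dE = (4*L*‖x1-x2‖^2)*(dE/2) := by ring
      have s1 : (4*L*‖x1-x2‖^2)*(dE/2) ≤ (4*L*‖x1-x2‖^2)*(dE - τ) :=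
        mul_le_mul_of_nonneg_left e2 h4L
      have s2 : (4*L*‖x1-x2‖^2)*(dE - τ) ≤ (4*L*‖x1-x2‖^2)*(dE - τ + (c - ρ₀)) :=
        mul_le_mul_of_nonneg_left (by linarith) h4L
      have s3 := mul_le_mul_of_nonneg_right e1 hdEpos.le
      linarith
    have htstB : tst * (u (ξ + f ((1/2:ℝ)•x1 + (1/2:ℝ)•x2) + (ρ₀ - dE)•ν)
        - u (ξ + f ((1/2:ℝ)•x1 + (1/2:ℝ)•x2) + (c - τ)•ν)) ≤ (8*B*L/dE) * ‖x1-x2‖^2 := by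
      have h1 := abs_le.1 hBtop
      have h2 := abs_le.1 hBlow
      have h3 : tst * (u (ξ + f ((1/2:ℝ)•x1 + (1/2:ℝ)•x2) + (ρ₀ - dE)•ν)
          - u (ξ + f ((1/2:ℝ)•x1 + (1/2:ℝ)•x2) + (c - τ)•ν)) ≤ tst * (2*B) := by
        apply mul_le_mul_of_nonneg_left (by linarith) htst0
      refine le_trans h3 ?_
      have e := mul_le_mul_of_nonneg_left htstb (by linarith : (0:ℝ) ≤ 2*B)
      have e1 : tst*(2*B)*dE = (2*B)*(tst*dE) := by ring
      have e2 : (2*B)*(4*L*‖x1-x2‖^2) = 8*B*L*‖x1-x2‖^2 := by ring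
      have hgoal' : tst*(2*B)*dE ≤ 8*B*L*‖x1-x2‖^2 := by linarith
      have h5 : tst*(2*B) ≤ 8*B*L*‖x1-x2‖^2/dE := (le_div_iff₀ hdEpos).2 hgoal'
      have h6 : 8*B*L/dE*‖x1-x2‖^2 = 8*B*L*‖x1-x2‖^2/dE := by ring
      linarith
    -- combine
    have hfinal : u (ξ + f ((1/2:ℝ)•x1 + (1/2:ℝ)•x2) + (ρ₀ - τ)•ν)
        ≤ u (ξ + f ((1/2:ℝ)•x1 + (1/2:ℝ)•x2) + (c - τ)•ν) + (8*B*L/dE) * ‖x1-x2‖^2 := by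
      have e : (1-tst) * u (ξ + f ((1/2:ℝ)•x1 + (1/2:ℝ)•x2) + (c - τ)•ν)
          + tst * u (ξ + f ((1/2:ℝ)•x1 + (1/2:ℝ)•x2) + (ρ₀ - dE)•ν)
          = u (ξ + f ((1/2:ℝ)•x1 + (1/2:ℝ)•x2) + (c - τ)•ν)
            + tst * (u (ξ + f ((1/2:ℝ)•x1 + (1/2:ℝ)•x2) + (ρ₀ - dE)•ν)
              - u (ξ + f ((1/2:ℝ)•x1 + (1/2:ℝ)•x2) + (c - τ)•ν)) := by ring
      linarith [hchordV, htstB, e]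
    have : (1 - 1/2) * u (ξ + f x1 + (ρ x1 - τ) • ν) + (1/2) * u (ξ + f x2 + (ρ x2 - τ) • ν)
        = (u (ξ + f x1 + (ρ x1 - τ) • ν) + u (ξ + f x2 + (ρ x2 - τ) • ν))/2 := by ring
    rw [this] at hchordAB
    linarith
  -- convexity of the pushed-down functions
  set K := 64*B*L/dE with hKdef
  have hKpos : 0 < K := by
    rw [hKdef]
    exact div_pos (by positivity) hdEpos
  have hKe : 8*B*L/dE = K/8 := by rw [hKdef]; ring
  clear_value K
  have hgconv : ∀ τ : ℝ, 0 < τ → τ ≤ dE/2 → ConvexOn ℝ (Metric.ball (0:Euc' n) δ₂)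
      (fun x' => u (ξ + f x' + (ρ x' - τ) • ν) + K/2 * ‖x'‖^2) := by
    intro τ hτ0 hτE
    refine ⟨convex_ball _ _, ?_⟩
    intro x hx y hy p q hp hq hpq
    have hxy : ∀ s ∈ Set.Icc (0:ℝ) 1, x + s•(y - x) ∈ Metric.ball (0:Euc' n) δ₂ := by
      intro s hs
      have h1 : x + s•(y-x) = (1-s)•x + s•y := by module
      rw [h1]
      exact convex_ball _ _ hx hy (by linarith [hs.2]) hs.1 (by ring)
    have hxycb : ∀ s ∈ Set.Icc (0:ℝ) 1, x + s•(y - x) ∈ Metric.closedBall (0:Euc' n) δ₂ :=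
      fun s hs => Metric.ball_subset_closedBall (hxy s hs)
    have hxyn : ∀ s ∈ Set.Icc (0:ℝ) 1, ‖x + s•(y - x)‖ ≤ δ₂ := by
      intro s hs
      have := hxycb s hs
      rwa [Metric.mem_closedBall, dist_zero_right] at this
    have hIccCvx : ConvexOn ℝ (Set.Icc (0:ℝ) 1)
        (fun s => u (ξ + f (x + s•(y-x)) + (ρ (x + s•(y-x)) - τ) • ν) + K/2 * ‖x + s•(y-x)‖^2) := by
      apply convexOn_Icc_of_local_midpoint
      · -- continuity
        have hzc : ContinuousOn (fun s : ℝ => x + s•(y-x)) (Set.Icc 0 1) := by fun_prop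
        have hρz : ContinuousOn (fun s : ℝ => ρ (x + s•(y-x))) (Set.Icc 0 1) :=
          hρcont.comp hzc (fun s hs => hcbsub (hxycb s hs))
        apply ContinuousOn.add
        · apply huD.comp
          · exact (continuousOn_const.add ((f.continuous.comp_continuousOn hzc))).add
              ((hρz.sub continuousOn_const).smul continuousOn_const)
          · intro s hs
            exact (hext _ _ (hxyn s hs) (by linarith) (by linarith)).1
        · exact (continuousOn_const.mul ((hzc.norm).pow 2))
      · intro m hm
        have hs0pos : 0 < Real.sqrt (τ/(4*L)) := Real.sqrt_pos.2 (by positivity)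
        refine ⟨Real.sqrt (τ/(4*L))/(2*(‖y-x‖+1)), by positivity, fun η hη0 hηε h0η hη1 => ?_⟩
        have hm1 : m - η ∈ Set.Icc (0:ℝ) 1 := ⟨h0η, by nlinarith [hm.2]⟩
        have hm2 : m + η ∈ Set.Icc (0:ℝ) 1 := ⟨by nlinarith [hm.1], hη1⟩
        have hz1 := hxycb _ hm1
        have hz2 := hxycb _ hm2
        have hd : ‖(x + (m-η)•(y-x)) - (x + (m+η)•(y-x))‖ < Real.sqrt (τ/(4*L)) := by
          have he : (x + (m-η)•(y-x)) - (x + (m+η)•(y-x)) = (-(2*η))•(y-x) := by module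
          rw [he, norm_smul, Real.norm_eq_abs, abs_neg, abs_of_pos (by linarith)]
          have hn0 : (0:ℝ) ≤ ‖y-x‖ := norm_nonneg _
          calc 2*η*‖y-x‖ ≤ 2*(Real.sqrt (τ/(4*L))/(2*(‖y-x‖+1)))*‖y-x‖ := by nlinarith
            _ < Real.sqrt (τ/(4*L)) := by
                have hp1 : (0:ℝ) < ‖y-x‖ + 1 := by linarith
                have h1 : ‖y-x‖/(‖y-x‖+1) < 1 := by
                  rw [div_lt_one hp1]; linarith
                have h2 : 2*(Real.sqrt (τ/(4*L))/(2*(‖y-x‖+1)))*‖y-x‖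
                    = Real.sqrt (τ/(4*L))*(‖y-x‖/(‖y-x‖+1)) := by
                  field_simp
                rw [h2]
                calc Real.sqrt (τ/(4*L))*(‖y-x‖/(‖y-x‖+1))
                    < Real.sqrt (τ/(4*L))*1 := by
                      exact mul_lt_mul_of_pos_left h1 hs0pos
                  _ = Real.sqrt (τ/(4*L)) := mul_one _
        have hd2 : 2*L*‖(x + (m-η)•(y-x)) - (x + (m+η)•(y-x))‖^2 < τ := by
          have h1 : ‖(x + (m-η)•(y-x)) - (x + (m+η)•(y-x))‖^2 < Real.sqrt (τ/(4*L))^2 := by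
            nlinarith [norm_nonneg ((x + (m-η)•(y-x)) - (x + (m+η)•(y-x)))]
          rw [Real.sq_sqrt (by positivity : (0:ℝ) ≤ τ/(4*L))] at h1
          have h2 : 2*L*‖(x + (m-η)•(y-x)) - (x + (m+η)•(y-x))‖^2 < 2*L*(τ/(4*L)) := by
            apply mul_lt_mul_of_pos_left h1 (by linarith)
          have h3 : 2*L*(τ/(4*L)) = τ/2 := by field_simp; ring
          linarith
        have hmC := hmidC τ hτ0 hτE _ hz1 _ hz2 hd2
        have hzm : (1/2:ℝ)•(x + (m-η)•(y-x)) + (1/2:ℝ)•(x + (m+η)•(y-x)) = x + m•(y-x) := by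
          module
        rw [hzm, hKe] at hmC
        -- parallelogram identity
        have hpar : ‖x + (m-η)•(y-x)‖^2 + ‖x + (m+η)•(y-x)‖^2
            = 2*‖x + m•(y-x)‖^2 + (1/2)*‖(x + (m-η)•(y-x)) - (x + (m+η)•(y-x))‖^2 := by
          have hpl := parallelogram_law_with_norm ℝ (x + (m-η)•(y-x)) (x + (m+η)•(y-x))
          have hsum : (x + (m-η)•(y-x)) + (x + (m+η)•(y-x)) = (2:ℝ)•(x + m•(y-x)) := by module
          rw [hsum] at hpl
          have h2n : ‖(2:ℝ)•(x + m•(y-x))‖^2 = 4*‖x + m•(y-x)‖^2 := by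
            rw [norm_smul, Real.norm_eq_abs]
            rw [abs_of_pos (by norm_num : (0:ℝ) < 2)]
            ring
          nlinarith [hpl, h2n]
        nlinarith [hmC, hpar, sq_nonneg ‖(x + (m-η)•(y-x)) - (x + (m+η)•(y-x))‖]
    -- extract the chord inequality
    have h0m : (0:ℝ) ∈ Set.Icc (0:ℝ) 1 := by norm_num
    have h1m : (1:ℝ) ∈ Set.Icc (0:ℝ) 1 := by norm_num
    have hcc := hIccCvx.2 h0m h1m hp hq hpq
    simp only [smul_eq_mul] at hcc
    rw [show p * 0 + q * 1 = q from by ring] at hcc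
    have hz0 : x + (0:ℝ)•(y-x) = x := by module
    have hz1 : x + (1:ℝ)•(y-x) = y := by module
    have hzq : x + q•(y-x) = p•x + q•y := by
      have hp' : p = 1 - q := by linarith
      rw [hp']; module
    rw [hzq, hz0, hz1] at hcc
    simp only [smul_eq_mul]
    linarith [hcc]
  -- pass to the limit τ → 0⁺
  have hfr2 : ∀ w : Euc' n, w ∈ Metric.ball (0:Euc' n) δ₂ → ξ + f w + ρ w • ν ∈ frontier Ω := by
    intro w hw
    rw [Metric.mem_ball, dist_zero_right] at hw
    exact hfr w (lt_trans hw hδ₂δ)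
  have hfrc : frontier Ω ⊆ Ωᶜ := by
    rw [hΩo.frontier_eq]
    exact fun p hp => hp.2
  have hg0 : ConvexOn ℝ (Metric.ball (0:Euc' n) δ₂)
      (fun x' => u (ξ + f x' + ρ x' • ν) + K/2 * ‖x'‖^2) := by
    refine ⟨convex_ball _ _, ?_⟩
    intro x hx y hy p q hp hq hpq
    have hzm : p•x + q•y ∈ Metric.ball (0:Euc' n) δ₂ := convex_ball _ _ hx hy hp hq hpq
    have hlim : ∀ w ∈ Metric.ball (0:Euc' n) δ₂,
        Filter.Tendsto (fun τ : ℝ => u (ξ + f w + (ρ w - τ) • ν)) (𝓝[>] 0)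
          (𝓝 (u (ξ + f w + ρ w • ν))) := by
      intro w hw
      have hwn : ‖w‖ ≤ δ₂ := by
        rw [Metric.mem_ball, dist_zero_right] at hw; linarith
      have hpt : ξ + f w + ρ w • ν ∈ Ωᶜ := hfrc (hfr2 w hw)
      have hcw2 : ContinuousWithinAt u Ωᶜ (ξ + f w + ρ w • ν) := hu _ hpt
      apply hcw2.tendsto.comp
      apply tendsto_nhdsWithin_of_tendsto_nhds_of_eventually_within
      · have hct : Continuous (fun τ : ℝ => ξ + f w + (ρ w - τ) • ν) := by fun_prop
        have := (hct.tendsto 0).mono_left (nhdsWithin_le_nhds (s := Set.Ioi (0:ℝ)))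
        simpa using this
      · filter_upwards [Ioo_mem_nhdsGT_of_mem (Set.left_mem_Ico.2 (by linarith : (0:ℝ) < dE/2))]
          with τ hτ
        exact hDΩc (hext w (ρ w - τ) hwn (by linarith [hτ.2]) (by linarith [hτ.1])).1
    have hev : ∀ᶠ τ in 𝓝[>] (0:ℝ),
        0 ≤ p * (u (ξ + f x + (ρ x - τ) • ν) + K/2 * ‖x‖^2)
          + q * (u (ξ + f y + (ρ y - τ) • ν) + K/2 * ‖y‖^2)
          - (u (ξ + f (p•x + q•y) + (ρ (p•x + q•y) - τ) • ν) + K/2 * ‖p•x + q•y‖^2) := by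
      filter_upwards [Ioo_mem_nhdsGT_of_mem (Set.left_mem_Ico.2 (by linarith : (0:ℝ) < dE/2))]
        with τ hτ
      have := (hgconv τ hτ.1 hτ.2.le).2 hx hy hp hq hpq
      simp only [smul_eq_mul] at this
      linarith
    have htend : Filter.Tendsto (fun τ : ℝ =>
        p * (u (ξ + f x + (ρ x - τ) • ν) + K/2 * ‖x‖^2)
          + q * (u (ξ + f y + (ρ y - τ) • ν) + K/2 * ‖y‖^2)
          - (u (ξ + f (p•x + q•y) + (ρ (p•x + q•y) - τ) • ν) + K/2 * ‖p•x + q•y‖^2)) (𝓝[>] (0:ℝ))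
        (𝓝 (p * (u (ξ + f x + ρ x • ν) + K/2 * ‖x‖^2)
          + q * (u (ξ + f y + ρ y • ν) + K/2 * ‖y‖^2)
          - (u (ξ + f (p•x + q•y) + ρ (p•x + q•y) • ν) + K/2 * ‖p•x + q•y‖^2))) := by
      exact (((((hlim x hx).add tendsto_const_nhds).const_mul p).add
        (((hlim y hy).add tendsto_const_nhds).const_mul q)).sub
        ((hlim _ hzm).add tendsto_const_nhds))
    have h0le := ge_of_tendsto htend hev
    simp only [smul_eq_mul]
    linarith
  -- conclusion
  refine ⟨f, ν, δ₂, ρ, ⟨hδ₂pos, hν, horth, hρ0, fun x' h => hfr x' (lt_trans h hδ₂δ), U, hU,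
    fun x' h t ht => hchar x' (lt_trans h hδ₂δ) t ht⟩, K, hKpos, ?_⟩
  apply convexOn_congr' hg0
  intro w hw
  rw [hbc _ (hfr2 w hw)]
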